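/- Viewing the unique root y(m) ∈ (0,1) of (m-4)y⁴ - (m-1)y³ - y + 1 = 0 as a differentiable function of the real parameter m ≥ 5, its derivative satisfies y'(m) = - y⁴(y-1)² / (3[y⁴ + (y-1)²]), which is strictly negative; hence y(m) is strictly decreasing in m. -/

import Mathlib

theorem stmt5 (y : ℝ → ℝ)
    (hroot : ∀ m : ℝ, 5 ≤ m → y m ∈ Set.Ioo (0 : ℝ) 1 ∧
      (m - 4) * (y m) ^ 4 - (m - 1) * (y m) ^ 3 - y m + 1 = 0)
    (hdiff : ∀ m : ℝ, 5 ≤ m → DifferentiableAt ℝ y m) :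
    (∀ m : ℝ, 5 ≤ m →
      deriv y m = -((y m) ^ 4 * (y m - 1) ^ 2) / (3 * ((y m) ^ 4 + (y m - 1) ^ 2)) ∧
      deriv y m < 0) ∧
    StrictAntiOn y (Set.Ici (5 : ℝ)) := by
  have key : ∀ m : ℝ, 5 ≤ m →
      deriv y m = -((y m) ^ 4 * (y m - 1) ^ 2) / (3 * ((y m) ^ 4 + (y m - 1) ^ 2)) ∧
      deriv y m < 0 := by
    intro m hm
    obtain ⟨⟨hy0, hy1⟩, hE⟩ := hroot m hm
    set Y := y m with hY
    set Y' := deriv y m with hY'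
    have hy := (hdiff m hm).hasDerivAt
    -- the defining function
    set F : ℝ → ℝ := fun t => (t - 4) * (y t) ^ 4 - (t - 1) * (y t) ^ 3 - y t + 1 with hFdef
    have hF : HasDerivAt F
        ((1 * Y ^ 4 + (m - 4) * (4 * Y ^ 3 * Y')) -
          (1 * Y ^ 3 + (m - 1) * (3 * Y ^ 2 * Y')) - Y') m := by
      have h1 : HasDerivAt (fun t : ℝ => t - 4) 1 m := (hasDerivAt_id m).sub_const 4
      have h2 : HasDerivAt (fun t : ℝ => t - 1) 1 m := (hasDerivAt_id m).sub_const 1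
      have h4 : HasDerivAt (fun t => (y t) ^ 4) (4 * Y ^ 3 * Y') m := by
        simpa using hy.fun_pow 4
      have h3 : HasDerivAt (fun t => (y t) ^ 3) (3 * Y ^ 2 * Y') m := by
        simpa using hy.fun_pow 3
      exact (((h1.mul h4).sub (h2.mul h3)).sub hy).add_const 1
    have hFzero : ∀ t ∈ Set.Ici (5 : ℝ), F t = 0 := fun t ht => (hroot t ht).2
    have hderivF : deriv F m = 0 := by
      have h1 : derivWithin F (Set.Ici (5 : ℝ)) m = deriv F m :=
        hF.differentiableAt.derivWithin (uniqueDiffOn_Ici 5 m hm)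
      have h2 : derivWithin F (Set.Ici (5 : ℝ)) m =
          derivWithin (fun _ => (0 : ℝ)) (Set.Ici (5 : ℝ)) m :=
        derivWithin_congr hFzero (hFzero m hm)
      rw [← h1, h2]
      exact congrFun (derivWithin_fun_const _ _) m
    have hEq : (1 * Y ^ 4 + (m - 4) * (4 * Y ^ 3 * Y')) -
        (1 * Y ^ 3 + (m - 1) * (3 * Y ^ 2 * Y')) - Y' = 0 := by
      rw [← hF.deriv]; exact hderivF
    -- coefficient identity
    have hc : (4 * (m - 4) * Y ^ 3 - 3 * (m - 1) * Y ^ 2 - 1) * (Y * (Y - 1)) =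
        3 * (Y ^ 4 + (Y - 1) ^ 2) := by
      linear_combination (4 * Y - 3) * hE
    have hH : Y' * (4 * (m - 4) * Y ^ 3 - 3 * (m - 1) * Y ^ 2 - 1) = Y ^ 3 - Y ^ 4 := by
      linarith [hEq]
    have hmain : Y' * (3 * (Y ^ 4 + (Y - 1) ^ 2)) = -(Y ^ 4 * (Y - 1) ^ 2) := by
      have := congrArg (· * Y') hc
      nlinarith [hH, hc]
    have hden : 0 < 3 * (Y ^ 4 + (Y - 1) ^ 2) := by nlinarith [sq_nonneg (Y-1), pow_pos hy0 4]
    have hformula : Y' = -(Y ^ 4 * (Y - 1) ^ 2) / (3 * (Y ^ 4 + (Y - 1) ^ 2)) := by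
      field_simp
      linarith [hmain]
    refine ⟨hformula, ?_⟩
    rw [hformula]
    apply div_neg_of_neg_of_pos _ hden
    have : 0 < Y ^ 4 * (Y - 1) ^ 2 := by
      apply mul_pos (pow_pos hy0 4)
      have : Y - 1 ≠ 0 := by linarith
      positivity
    linarith
  refine ⟨key, ?_⟩
  apply StrictAntiOn.mono (s := Set.Ici (5 : ℝ)) ?_ le_rfl
  apply strictAntiOn_of_deriv_neg (convex_Ici 5)
  · intro t ht
    exact (hdiff t ht).continuousAt.continuousWithinAt
  · intro t ht
    rw [interior_Ici] at ht
    exact (key t (le_of_lt ht)).2
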